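/- (Toeplitz autocovariance of discretised Langevin displacements.) Consider the discrete Langevin process of the context with parameters γ, k, τ > 0. Then for all n ≥ 0 the displacement autocovariances are Cov(ΔX_n, ΔX_{n+m}) = 2kτ(1 - φ(γτ)) when m = 0, and Cov(ΔX_n, ΔX_{n+m}) = kγτ²φ(γτ)²·exp(-(m-1)γτ) when m ≥ 1. -/

import Mathlib

open MeasureTheory ProbabilityTheory

/-- `φ(x) = (1 - exp(-x))/x`. -/
noncomputable def phi (x : ℝ) : ℝ := (1 - Real.exp (-x)) / x

/-- The discrete Langevin process with parameters `γ, k, τ`: an initial velocity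
`U₀ ~ N(0, kγ)`, together with an i.i.d. sequence `(ε_n)` of 2-dimensional Gaussian
random vectors `ε_n = (ε_n¹, ε_n²)` with mean zero and covariance matrix `C` given by
`C₁₁ = 2kτ(1 - 2φ(γτ) + φ(2γτ))`, `C₁₂ = C₂₁ = k(γτφ(γτ))²`, `C₂₂ = 2kγ²τφ(2γτ)`
(specified via the laws of all linear functionals), the whole sequence being
independent of `U₀`. -/
structure DiscreteLangevin {Ω : Type*} [MeasurableSpace Ω] (P : Measure Ω)
    (γ k τ : ℝ) where
  U0 : Ω → ℝ
  ε : ℕ → Ω → ℝ × ℝ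
  meas_U0 : Measurable U0
  meas_ε : ∀ n, Measurable (ε n)
  law_U0 : P.map U0 = gaussianReal 0 (k * γ).toNNReal
  law_ε : ∀ (n : ℕ) (a b : ℝ),
    P.map (fun ω => a * (ε n ω).1 + b * (ε n ω).2)
      = gaussianReal 0 (a ^ 2 * (2 * k * τ * (1 - 2 * phi (γ * τ) + phi (2 * γ * τ)))
          + 2 * a * b * (k * (γ * τ * phi (γ * τ)) ^ 2)
          + b ^ 2 * (2 * k * γ ^ 2 * τ * phi (2 * γ * τ))).toNNReal
  indep_ε : iIndepFun ε P
  indep_U0 : IndepFun U0 (fun ω => fun n => ε n ω) P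

/-- The velocities of the discrete Langevin process:
`U_{n+1} = exp(-γτ)·U_n + ε_n²`. -/
noncomputable def DiscreteLangevin.U {Ω : Type*} [MeasurableSpace Ω] {P : Measure Ω}
    {γ k τ : ℝ} (L : DiscreteLangevin P γ k τ) : ℕ → Ω → ℝ
  | 0 => L.U0
  | n + 1 => fun ω => Real.exp (-(γ * τ)) * L.U n ω + (L.ε n ω).2

/-- The displacements of the discrete Langevin process:
`ΔX_n = τφ(γτ)·U_n + ε_n¹`. -/
noncomputable def DiscreteLangevin.ΔX {Ω : Type*} [MeasurableSpace Ω] {P : Measure Ω}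
    {γ k τ : ℝ} (L : DiscreteLangevin P γ k τ) (n : ℕ) : Ω → ℝ :=
  fun ω => τ * phi (γ * τ) * L.U n ω + (L.ε n ω).1

/-- The covariance `Cov(X, Y) = E[(X - E X)(Y - E Y)]` of two real random variables. -/
noncomputable def cov {Ω : Type*} [MeasurableSpace Ω] (P : Measure Ω) (X Y : Ω → ℝ) : ℝ :=
  ∫ ω, (X ω - ∫ x, X x ∂P) * (Y ω - ∫ x, Y x ∂P) ∂P


section AuxiliaryLemmas
open Real Filter

lemma integral_gaussianReal_eq {v : NNReal} (hv : v ≠ 0) (g : ℝ → ℝ) :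
    ∫ x, g x ∂(gaussianReal 0 v) = ∫ x, gaussianPDFReal 0 v x * g x := by
  rw [gaussianReal_of_var_ne_zero _ hv]
  have h1 : gaussianPDF 0 v = fun x => ((gaussianPDFReal 0 v x).toNNReal : ENNReal) := rfl
  rw [h1, integral_withDensity_eq_integral_smul
    ((measurable_gaussianPDFReal 0 v).real_toNNReal) g]
  congr 1
  ext x
  simp [NNReal.smul_def, Real.coe_toNNReal _ (gaussianPDFReal_nonneg 0 v x)]

lemma integrable_gaussianReal_iff {v : NNReal} (hv : v ≠ 0) {g : ℝ → ℝ} :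
    Integrable g (gaussianReal 0 v) ↔
      Integrable (fun x => g x * gaussianPDFReal 0 v x) volume := by
  rw [gaussianReal_of_var_ne_zero _ hv]
  rw [integrable_withDensity_iff (measurable_gaussianPDF 0 v)
    (Filter.Eventually.of_forall fun x => ENNReal.ofReal_lt_top)]
  refine integrable_congr (Filter.Eventually.of_forall fun x => ?_)
  simp [gaussianPDF_def, ENNReal.toReal_ofReal (gaussianPDFReal_nonneg 0 v x)]

lemma integral_self_mul_exp_neg_mul_sq {b : ℝ} (hb : 0 < b) :
    ∫ x : ℝ, x * Real.exp (-b * x ^ 2) = 0 := by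
  have h := integral_neg_eq_self (fun x : ℝ => x * Real.exp (-b * x ^ 2)) volume
  simp only [neg_mul, neg_sq] at h
  have h2 : ∫ x : ℝ, -(x * Real.exp (-b * x ^ 2)) = ∫ x : ℝ, x * Real.exp (-b * x ^ 2) := by
    simpa using h
  rw [integral_neg] at h2
  linarith

lemma integrable_sq_mul_exp_neg_mul_sq {b : ℝ} (hb : 0 < b) :
    Integrable (fun x : ℝ => x ^ 2 * Real.exp (-b * x ^ 2)) volume := by
  have h := integrable_rpow_mul_exp_neg_mul_sq hb (s := ((2:ℕ):ℝ)) (by norm_num)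
  simpa [Real.rpow_natCast] using h

lemma integral_sq_mul_exp_neg_mul_sq {b : ℝ} (hb : 0 < b) :
    ∫ x : ℝ, x ^ 2 * Real.exp (-b * x ^ 2) = (2*b)⁻¹ * Real.sqrt (π / b) := by
  have hu : ∀ x : ℝ, HasDerivAt (fun y : ℝ => y) 1 x := fun x => hasDerivAt_id x
  have hv : ∀ x : ℝ, HasDerivAt (fun y : ℝ => -(2*b)⁻¹ * Real.exp (-b * y ^ 2))
      (x * Real.exp (-b * x ^ 2)) x := by
    intro x
    have h1 : HasDerivAt (fun y : ℝ => -b * y ^ 2) (-b * (2 * x)) x := by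
      simpa using (hasDerivAt_pow 2 x).const_mul (-b)
    have h2 := (h1.exp).const_mul (-(2*b)⁻¹)
    refine h2.congr_deriv ?_
    have hb0 : (2*b)⁻¹ * (2*b) = 1 := inv_mul_cancel₀ (by positivity)
    linear_combination (x * Real.exp (-b * x ^ 2)) * hb0
  have key := integral_mul_deriv_eq_deriv_mul_of_integrable (fun x _ => hu x) (fun x _ => hv x)
    (by
      refine (integrable_sq_mul_exp_neg_mul_sq hb).congr
        (Filter.Eventually.of_forall fun x => ?_)
      simp only [Pi.mul_apply]; ring)
    (by
      refine ((integrable_exp_neg_mul_sq hb).const_mul (-(2*b)⁻¹)).congr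
        (Filter.Eventually.of_forall fun x => ?_)
      simp only [Pi.mul_apply]; ring)
    (by
      refine ((integrable_mul_exp_neg_mul_sq hb).const_mul (-(2*b)⁻¹)).congr
        (Filter.Eventually.of_forall fun x => ?_)
      simp only [Pi.mul_apply]; ring)
  have h3 : ∫ x : ℝ, x * (x * Real.exp (-b * x ^ 2)) = ∫ x : ℝ, x ^ 2 * Real.exp (-b * x ^ 2) := by
    congr 1; funext x; ring
  rw [h3] at key
  rw [key]
  have h4 : ∫ x : ℝ, (1:ℝ) * (-(2*b)⁻¹ * Real.exp (-b * x ^ 2))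
      = -(2*b)⁻¹ * ∫ x : ℝ, Real.exp (-b * x ^ 2) := by
    simp_rw [one_mul]; exact integral_const_mul _ _
  rw [h4, integral_gaussian]
  ring

lemma gaussianPDFReal_zero_mean (v : NNReal) :
    gaussianPDFReal 0 v = fun x =>
      (Real.sqrt (2 * π * v))⁻¹ * Real.exp (-(2 * (v:ℝ))⁻¹ * x ^ 2) := by
  funext x
  rw [gaussianPDFReal_def]
  show (Real.sqrt (2 * π * v))⁻¹ * Real.exp (-(x - 0) ^ 2 / (2 * (v:ℝ)))
      = (Real.sqrt (2 * π * v))⁻¹ * Real.exp (-(2 * (v:ℝ))⁻¹ * x ^ 2)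
  rw [show -(x - 0) ^ 2 / (2 * (v:ℝ)) = -(2 * (v:ℝ))⁻¹ * x ^ 2 by ring]

lemma gaussianReal_integral_id (v : NNReal) : ∫ x, x ∂(gaussianReal 0 v) = 0 := by
  by_cases hv : v = 0
  · simp [hv, gaussianReal_zero_var]
  · have hv' : 0 < (v:ℝ) := by positivity
    have hb : 0 < (2 * (v:ℝ))⁻¹ := by positivity
    rw [integral_gaussianReal_eq hv]
    rw [show (fun x => gaussianPDFReal 0 v x * x)
        = fun x => (Real.sqrt (2 * π * v))⁻¹ * (x * Real.exp (-(2 * (v:ℝ))⁻¹ * x ^ 2)) by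
      rw [gaussianPDFReal_zero_mean]; funext x; ring]
    rw [integral_const_mul, integral_self_mul_exp_neg_mul_sq hb, mul_zero]

lemma gaussianReal_integral_sq (v : NNReal) : ∫ x, x ^ 2 ∂(gaussianReal 0 v) = v := by
  by_cases hv : v = 0
  · simp [hv, gaussianReal_zero_var]
  · have hv' : 0 < (v:ℝ) := by positivity
    have hb : 0 < (2 * (v:ℝ))⁻¹ := by positivity
    rw [integral_gaussianReal_eq hv]
    rw [show (fun x => gaussianPDFReal 0 v x * x ^ 2)
        = fun x => (Real.sqrt (2 * π * v))⁻¹ * (x ^ 2 * Real.exp (-(2 * (v:ℝ))⁻¹ * x ^ 2)) by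
      rw [gaussianPDFReal_zero_mean]; funext x; ring]
    rw [integral_const_mul, integral_sq_mul_exp_neg_mul_sq hb]
    have h1 : (2 * (2 * (v:ℝ))⁻¹)⁻¹ = (v:ℝ) := by field_simp
    have h2 : π / (2 * (v:ℝ))⁻¹ = 2 * π * (v:ℝ) := by field_simp
    rw [h1, h2]
    have hS : 0 < Real.sqrt (2 * π * (v:ℝ)) := Real.sqrt_pos.mpr (by positivity)
    field_simp

lemma gaussianReal_memℒp_two (v : NNReal) : MemLp id 2 (gaussianReal 0 v) := by
  by_cases hv : v = 0
  · rw [hv, gaussianReal_zero_var]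
    exact (memLp_const (0:ℝ)).ae_eq (MeasureTheory.ae_eq_dirac (id : ℝ → ℝ)).symm
  · have hv' : 0 < (v:ℝ) := by positivity
    have hb : 0 < (2 * (v:ℝ))⁻¹ := by positivity
    rw [memLp_two_iff_integrable_sq aestronglyMeasurable_id]
    rw [show (fun x : ℝ => id x ^ 2) = fun x : ℝ => x ^ 2 from rfl]
    rw [integrable_gaussianReal_iff hv]
    refine (((integrable_sq_mul_exp_neg_mul_sq hb).const_mul
      ((Real.sqrt (2 * π * v))⁻¹)).congr (Filter.Eventually.of_forall fun x => ?_))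
    rw [gaussianPDFReal_zero_mean]
    ring

section Helpers
variable {Ω : Type*} [MeasurableSpace Ω] {P : Measure Ω}

lemma memℒp_two_integrable_mul {f g : Ω → ℝ} (hf : MemLp f 2 P) (hg : MemLp g 2 P) :
    Integrable (fun ω => f ω * g ω) P := by
  have h : MemLp (g • f) 1 P :=
    hf.smul hg
  refine (memLp_one_iff_integrable.mp h).congr (Filter.Eventually.of_forall fun ω => ?_)
  simp [mul_comm]

lemma integral_comb_mul_left (a : ℝ) {f g h : Ω → ℝ} (hf : MemLp f 2 P)
    (hg : MemLp g 2 P) (hh : MemLp h 2 P) :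
    ∫ ω, (a * f ω + g ω) * h ω ∂P
      = a * ∫ ω, f ω * h ω ∂P + ∫ ω, g ω * h ω ∂P := by
  have h1 := memℒp_two_integrable_mul hf hh
  have h2 := memℒp_two_integrable_mul hg hh
  calc ∫ ω, (a * f ω + g ω) * h ω ∂P
      = ∫ ω, a * (f ω * h ω) + g ω * h ω ∂P := by congr 1; funext ω; ring
    _ = a * ∫ ω, f ω * h ω ∂P + ∫ ω, g ω * h ω ∂P := by
        rw [integral_add (h1.const_mul a) h2, integral_const_mul]

lemma integral_comb_mul_right (a : ℝ) {f g h : Ω → ℝ} (hf : MemLp f 2 P)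
    (hg : MemLp g 2 P) (hh : MemLp h 2 P) :
    ∫ ω, f ω * (a * g ω + h ω) ∂P
      = a * ∫ ω, f ω * g ω ∂P + ∫ ω, f ω * h ω ∂P := by
  have h1 := memℒp_two_integrable_mul hf hg
  have h2 := memℒp_two_integrable_mul hf hh
  calc ∫ ω, f ω * (a * g ω + h ω) ∂P
      = ∫ ω, a * (f ω * g ω) + f ω * h ω ∂P := by congr 1; funext ω; ring
    _ = _ := by rw [integral_add (h1.const_mul a) h2, integral_const_mul]

lemma moments_of_gaussian_law {X : Ω → ℝ} (hX : Measurable X) {v : ℝ} (hv : 0 ≤ v)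
    (h : P.map X = gaussianReal 0 v.toNNReal) :
    MemLp X 2 P ∧ (∫ ω, X ω ∂P) = 0 ∧ (∫ ω, X ω ^ 2 ∂P) = v := by
  refine ⟨?_, ?_, ?_⟩
  · have hh := gaussianReal_memℒp_two v.toNNReal
    rw [← h] at hh
    exact (memLp_map_measure_iff aestronglyMeasurable_id hX.aemeasurable).mp hh
  · have h2 := integral_map (μ := P) (f := fun y : ℝ => y) hX.aemeasurable
      (aestronglyMeasurable_id (μ := P.map X))
    rw [← h2, h]
    exact gaussianReal_integral_id _
  · have h2 := integral_map (μ := P) (f := fun y : ℝ => y ^ 2) hX.aemeasurable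
      ((measurable_id.pow_const 2).aestronglyMeasurable (μ := P.map X))
    rw [show (fun ω => X ω ^ 2) = fun ω => (fun y : ℝ => y ^ 2) (X ω) from rfl, ← h2, h,
      gaussianReal_integral_sq]
    exact Real.coe_toNNReal v hv

lemma aux_exp_nonneg {x : ℝ} (hx : 0 ≤ x) :
    0 ≤ 2 * x - 3 + 4 * Real.exp (-x) - Real.exp (-(2 * x)) := by
  set f : ℝ → ℝ := fun y => 2 * y - 3 + 4 * Real.exp (-y) - Real.exp (-(2 * y)) with hf
  have hder : ∀ y : ℝ, HasDerivAt f
      (2 - 4 * Real.exp (-y) + 2 * Real.exp (-(2 * y))) y := by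
    intro y
    have h1 : HasDerivAt (fun z : ℝ => 2 * z - 3) 2 y := by
      simpa using ((hasDerivAt_id y).const_mul 2).sub_const 3
    have h2 : HasDerivAt (fun z : ℝ => Real.exp (-z)) (-Real.exp (-y)) y := by
      simpa using ((hasDerivAt_id y).neg).exp
    have h3 : HasDerivAt (fun z : ℝ => Real.exp (-(2 * z))) (-(Real.exp (-(2 * y)) * 2)) y := by
      simpa using (((hasDerivAt_id y).const_mul 2).neg).exp
    have h4 := (h1.add (h2.const_mul 4)).sub h3
    refine h4.congr_deriv ?_
    ring
  have hmono : Monotone f := by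
    refine monotone_of_deriv_nonneg (fun y => (hder y).differentiableAt) fun y => ?_
    rw [(hder y).deriv]
    have he : Real.exp (-(2 * y)) = Real.exp (-y) * Real.exp (-y) := by
      rw [← Real.exp_add]; ring_nf
    nlinarith [sq_nonneg (1 - Real.exp (-y)), he]
  have h0 : f 0 = 0 := by simp [hf]; norm_num
  have := hmono hx
  rw [h0] at this
  simpa [hf] using this

end Helpers

section Scalars

lemma phi_pos {x : ℝ} (hx : 0 < x) : 0 < phi x := by
  have h : Real.exp (-x) < 1 := by
    calc Real.exp (-x) < Real.exp 0 := Real.exp_lt_exp.mpr (by linarith)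
      _ = 1 := Real.exp_zero
  exact div_pos (by linarith) hx

lemma langevin_v1_nonneg {γ k τ : ℝ} (hγ : 0 < γ) (hk : 0 < k) (hτ : 0 < τ) :
    0 ≤ 2 * k * τ * (1 - 2 * phi (γ * τ) + phi (2 * γ * τ)) := by
  have hx : 0 < γ * τ := mul_pos hγ hτ
  have key : 1 - 2 * phi (γ * τ) + phi (2 * γ * τ)
      = (2 * (γ * τ) - 3 + 4 * Real.exp (-(γ * τ)) - Real.exp (-(2 * (γ * τ))))
        / (2 * (γ * τ)) := by
    unfold phi
    rw [show -(2 * γ * τ) = -(2 * (γ * τ)) by ring]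
    have h1 : γ * τ ≠ 0 := hx.ne'
    field_simp
    ring
  rw [key]
  exact mul_nonneg (by positivity) (div_nonneg (aux_exp_nonneg hx.le) (by positivity))

lemma langevin_id_VU {γ k τ : ℝ} (hγ : γ ≠ 0) (hτ : τ ≠ 0) :
    Real.exp (-(γ * τ)) ^ 2 * (k * γ) + 2 * k * γ ^ 2 * τ * phi (2 * γ * τ) = k * γ := by
  have h1 : γ * τ ≠ 0 := mul_ne_zero hγ hτ
  have he2 : Real.exp (-(2 * γ * τ)) = Real.exp (-(γ * τ)) * Real.exp (-(γ * τ)) := by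
    rw [← Real.exp_add]; ring_nf
  unfold phi
  rw [he2]
  field_simp
  ring

lemma langevin_id_var {γ k τ : ℝ} (hγ : γ ≠ 0) (hτ : τ ≠ 0) :
    (τ * phi (γ * τ)) ^ 2 * (k * γ)
      + 2 * k * τ * (1 - 2 * phi (γ * τ) + phi (2 * γ * τ))
      = 2 * k * τ * (1 - phi (γ * τ)) := by
  have h1 : γ * τ ≠ 0 := mul_ne_zero hγ hτ
  have he2 : Real.exp (-(2 * γ * τ)) = Real.exp (-(γ * τ)) * Real.exp (-(γ * τ)) := by
    rw [← Real.exp_add]; ring_nf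
  unfold phi
  rw [he2]
  field_simp
  ring

lemma langevin_id_cov {γ k τ : ℝ} (hγ : γ ≠ 0) (hτ : τ ≠ 0) :
    (τ * phi (γ * τ)) * (Real.exp (-(γ * τ)) * (τ * phi (γ * τ)) * (k * γ)
        + k * (γ * τ * phi (γ * τ)) ^ 2)
      = k * γ * τ ^ 2 * phi (γ * τ) ^ 2 := by
  have h1 : γ * τ ≠ 0 := mul_ne_zero hγ hτ
  unfold phi
  field_simp
  ring

end Scalars
end AuxiliaryLemmas

theorem langevin_displacement_autocovariance {Ω : Type*} [MeasurableSpace Ω]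
    (P : Measure Ω) [IsProbabilityMeasure P]
    (γ k τ : ℝ) (hγ : 0 < γ) (hk : 0 < k) (hτ : 0 < τ)
    (L : DiscreteLangevin P γ k τ) :
    (∀ n : ℕ, cov P (L.ΔX n) (L.ΔX n) = 2 * k * τ * (1 - phi (γ * τ)))
    ∧ ∀ n m : ℕ, 1 ≤ m →
        cov P (L.ΔX n) (L.ΔX (n + m))
          = k * γ * τ ^ 2 * phi (γ * τ) ^ 2 * Real.exp (-(((m : ℝ) - 1) * γ * τ)) := by
  have hγτ : 0 < γ * τ := mul_pos hγ hτ
  have h2γτ : 0 < 2 * γ * τ := by positivity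
  have hφ := phi_pos hγτ
  have hφ2 := phi_pos h2γτ
  -- variance constants
  set A : ℝ := 2 * k * τ * (1 - 2 * phi (γ * τ) + phi (2 * γ * τ)) with hA_def
  set B : ℝ := k * (γ * τ * phi (γ * τ)) ^ 2 with hB_def
  set C : ℝ := 2 * k * γ ^ 2 * τ * phi (2 * γ * τ) with hC_def
  have hA0 : 0 ≤ A := langevin_v1_nonneg hγ hk hτ
  have hB0 : 0 ≤ B := by positivity
  have hC0 : 0 ≤ C := by
    have := hφ2.le
    rw [hC_def]
    apply mul_nonneg (by positivity) this
  -- component laws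
  have law1 : ∀ n, P.map (fun ω => (L.ε n ω).1) = gaussianReal 0 A.toNNReal := by
    intro n
    have h := L.law_ε n 1 0
    rw [show (fun ω => 1 * (L.ε n ω).1 + 0 * (L.ε n ω).2) = fun ω => (L.ε n ω).1 by
      funext ω; ring] at h
    rw [h]
    norm_num
    rfl
  have law2 : ∀ n, P.map (fun ω => (L.ε n ω).2) = gaussianReal 0 C.toNNReal := by
    intro n
    have h := L.law_ε n 0 1
    rw [show (fun ω => 0 * (L.ε n ω).1 + 1 * (L.ε n ω).2) = fun ω => (L.ε n ω).2 by
      funext ω; ring] at h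
    rw [h]
    norm_num
    rfl
  have lawS : ∀ n, P.map (fun ω => (L.ε n ω).1 + (L.ε n ω).2)
      = gaussianReal 0 (A + 2 * B + C).toNNReal := by
    intro n
    have h := L.law_ε n 1 1
    rw [show (fun ω => 1 * (L.ε n ω).1 + 1 * (L.ε n ω).2)
        = fun ω => (L.ε n ω).1 + (L.ε n ω).2 by funext ω; ring] at h
    rw [h]
    norm_num [hA_def, hB_def, hC_def]
  -- measurability
  have hm1 : ∀ n, Measurable (fun ω => (L.ε n ω).1) := fun n =>
    measurable_fst.comp (L.meas_ε n)
  have hm2 : ∀ n, Measurable (fun ω => (L.ε n ω).2) := fun n =>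
    measurable_snd.comp (L.meas_ε n)
  -- moments
  have h1 := fun n => moments_of_gaussian_law (hm1 n) hA0 (law1 n)
  have h2 := fun n => moments_of_gaussian_law (hm2 n) hC0 (law2 n)
  have hS := fun n => moments_of_gaussian_law ((hm1 n).add (hm2 n))
    (by positivity) (lawS n)
  have hU0 := moments_of_gaussian_law L.meas_U0 (by positivity) L.law_U0
  have M1 : ∀ n, MemLp (fun ω => (L.ε n ω).1) 2 P := fun n => (h1 n).1
  have M2 : ∀ n, MemLp (fun ω => (L.ε n ω).2) 2 P := fun n => (h2 n).1
  have I1 : ∀ n, ∫ ω, (L.ε n ω).1 ∂P = 0 := fun n => (h1 n).2.1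
  have I2 : ∀ n, ∫ ω, (L.ε n ω).2 ∂P = 0 := fun n => (h2 n).2.1
  have Q1 : ∀ n, ∫ ω, (L.ε n ω).1 * (L.ε n ω).1 ∂P = A := by
    intro n; have := (h1 n).2.2; simpa [pow_two] using this
  have Q2 : ∀ n, ∫ ω, (L.ε n ω).2 * (L.ε n ω).2 ∂P = C := by
    intro n; have := (h2 n).2.2; simpa [pow_two] using this
  -- cross moment
  have Q12 : ∀ n, ∫ ω, (L.ε n ω).1 * (L.ε n ω).2 ∂P = B := by
    intro n
    have hsum : ∫ ω, ((L.ε n ω).1 + (L.ε n ω).2) * ((L.ε n ω).1 + (L.ε n ω).2) ∂P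
        = A + 2 * B + C := by
      have := (hS n).2.2; simpa [pow_two] using this
    have i11 := memℒp_two_integrable_mul (M1 n) (M1 n)
    have i12 := memℒp_two_integrable_mul (M1 n) (M2 n)
    have i22 := memℒp_two_integrable_mul (M2 n) (M2 n)
    have hexp : ∫ ω, ((L.ε n ω).1 + (L.ε n ω).2) * ((L.ε n ω).1 + (L.ε n ω).2) ∂P
        = ∫ ω, (L.ε n ω).1 * (L.ε n ω).1 ∂P
          + (2 * ∫ ω, (L.ε n ω).1 * (L.ε n ω).2 ∂P
            + ∫ ω, (L.ε n ω).2 * (L.ε n ω).2 ∂P) := by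
      rw [show (fun ω => ((L.ε n ω).1 + (L.ε n ω).2) * ((L.ε n ω).1 + (L.ε n ω).2))
          = fun ω => (L.ε n ω).1 * (L.ε n ω).1
            + (2 * ((L.ε n ω).1 * (L.ε n ω).2) + (L.ε n ω).2 * (L.ε n ω).2) by
        funext ω; ring]
      have i3 : Integrable (fun ω => 2 * ((L.ε n ω).1 * (L.ε n ω).2)
          + (L.ε n ω).2 * (L.ε n ω).2) P := (i12.const_mul 2).add i22
      rw [integral_add i11 i3, integral_add (i12.const_mul 2) i22, integral_const_mul]
    rw [hexp, Q1 n, Q2 n] at hsum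
    linarith
  -- independence
  have iU0ε1 : ∀ m, IndepFun L.U0 (fun ω => (L.ε m ω).1) P := fun m =>
    L.indep_U0.comp measurable_id (measurable_fst.comp (measurable_pi_apply m))
  have iU0ε2 : ∀ m, IndepFun L.U0 (fun ω => (L.ε m ω).2) P := fun m =>
    L.indep_U0.comp measurable_id (measurable_snd.comp (measurable_pi_apply m))
  have iεε : ∀ {n m : ℕ}, n ≠ m → ∀ {f g : ℝ × ℝ → ℝ}, Measurable f → Measurable g →
      IndepFun (fun ω => f (L.ε n ω)) (fun ω => g (L.ε m ω)) P := by
    intro n m hne f g hf hg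
    exact (L.indep_ε.indepFun hne).comp hf hg
  have hzmul : ∀ {X Y : Ω → ℝ}, IndepFun X Y P → AEStronglyMeasurable X P →
      AEStronglyMeasurable Y P → (∫ ω, X ω ∂P) = 0 → ∫ ω, X ω * Y ω ∂P = 0 := by
    intro X Y hI hX hY h0
    have hm := hI.integral_mul_eq_mul_integral hX hY
    simp only [Pi.mul_apply] at hm
    rw [hm, h0, zero_mul]
  -- velocity facts
  have MU : ∀ n, MemLp (L.U n) 2 P := by
    intro n
    induction n with
    | zero => exact hU0.1
    | succ n ih => exact (ih.const_mul _).add (M2 n)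
  have IU : ∀ n, ∫ ω, L.U n ω ∂P = 0 := by
    intro n
    induction n with
    | zero => exact hU0.2.1
    | succ n ih =>
      have hint : ∫ ω, (Real.exp (-(γ * τ)) * L.U n ω + (L.ε n ω).2) ∂P
          = Real.exp (-(γ * τ)) * ∫ ω, L.U n ω ∂P + ∫ ω, (L.ε n ω).2 ∂P := by
        rw [integral_add (((MU n).integrable one_le_two).const_mul _)
          ((M2 n).integrable one_le_two), integral_const_mul]
      calc ∫ ω, L.U (n + 1) ω ∂P
          = ∫ ω, (Real.exp (-(γ * τ)) * L.U n ω + (L.ε n ω).2) ∂P := rfl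
        _ = Real.exp (-(γ * τ)) * ∫ ω, L.U n ω ∂P + ∫ ω, (L.ε n ω).2 ∂P := hint
        _ = 0 := by rw [ih, I2 n]; ring
  have hUeps : ∀ n m : ℕ, n ≤ m →
      (∫ ω, L.U n ω * (L.ε m ω).1 ∂P = 0 ∧ ∫ ω, L.U n ω * (L.ε m ω).2 ∂P = 0) := by
    intro n
    induction n with
    | zero =>
      intro m _
      exact ⟨hzmul (iU0ε1 m) hU0.1.1 (M1 m).1 hU0.2.1,
        hzmul (iU0ε2 m) hU0.1.1 (M2 m).1 hU0.2.1⟩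
    | succ n ih =>
      intro m hm
      have hn_le : n ≤ m := le_trans (Nat.le_succ n) hm
      have hne : n ≠ m := by omega
      constructor
      · calc ∫ ω, L.U (n + 1) ω * (L.ε m ω).1 ∂P
            = ∫ ω, (Real.exp (-(γ * τ)) * L.U n ω + (L.ε n ω).2) * (L.ε m ω).1 ∂P := rfl
          _ = Real.exp (-(γ * τ)) * ∫ ω, L.U n ω * (L.ε m ω).1 ∂P
              + ∫ ω, (L.ε n ω).2 * (L.ε m ω).1 ∂P :=
            integral_comb_mul_left _ (MU n) (M2 n) (M1 m)
          _ = 0 := by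
            rw [(ih m hn_le).1,
              hzmul (iεε hne measurable_snd measurable_fst) (M2 n).1 (M1 m).1 (I2 n)]
            ring
      · calc ∫ ω, L.U (n + 1) ω * (L.ε m ω).2 ∂P
            = ∫ ω, (Real.exp (-(γ * τ)) * L.U n ω + (L.ε n ω).2) * (L.ε m ω).2 ∂P := rfl
          _ = Real.exp (-(γ * τ)) * ∫ ω, L.U n ω * (L.ε m ω).2 ∂P
              + ∫ ω, (L.ε n ω).2 * (L.ε m ω).2 ∂P :=
            integral_comb_mul_left _ (MU n) (M2 n) (M2 m)
          _ = 0 := by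
            rw [(ih m hn_le).2,
              hzmul (iεε hne measurable_snd measurable_snd) (M2 n).1 (M2 m).1 (I2 n)]
            ring
  have hcomm : ∀ (f g : Ω → ℝ), ∫ ω, f ω * g ω ∂P = ∫ ω, g ω * f ω ∂P := by
    intro f g
    congr 1
    funext ω
    ring
  have VU : ∀ n, ∫ ω, L.U n ω * L.U n ω ∂P = k * γ := by
    intro n
    induction n with
    | zero => have := hU0.2.2; simpa [pow_two, DiscreteLangevin.U] using this
    | succ n ih =>
      have MU1 : MemLp (L.U (n + 1)) 2 P := MU (n + 1)
      calc ∫ ω, L.U (n + 1) ω * L.U (n + 1) ω ∂P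
          = ∫ ω, (Real.exp (-(γ * τ)) * L.U n ω + (L.ε n ω).2) * L.U (n + 1) ω ∂P := rfl
        _ = Real.exp (-(γ * τ)) * ∫ ω, L.U n ω * L.U (n + 1) ω ∂P
            + ∫ ω, (L.ε n ω).2 * L.U (n + 1) ω ∂P :=
          integral_comb_mul_left _ (MU n) (M2 n) MU1
        _ = k * γ := by
          have e1 : ∫ ω, L.U n ω * L.U (n + 1) ω ∂P
              = Real.exp (-(γ * τ)) * ∫ ω, L.U n ω * L.U n ω ∂P
                + ∫ ω, L.U n ω * (L.ε n ω).2 ∂P :=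
            integral_comb_mul_right _ (MU n) (MU n) (M2 n)
          have e2 : ∫ ω, (L.ε n ω).2 * L.U (n + 1) ω ∂P
              = Real.exp (-(γ * τ)) * ∫ ω, (L.ε n ω).2 * L.U n ω ∂P
                + ∫ ω, (L.ε n ω).2 * (L.ε n ω).2 ∂P :=
            integral_comb_mul_right _ (M2 n) (MU n) (M2 n)
          rw [e1, e2, ih, Q2 n, (hUeps n n le_rfl).2, hcomm (fun ω => (L.ε n ω).2) (L.U n),
            (hUeps n n le_rfl).2]
          have := langevin_id_VU (k := k) hγ.ne' hτ.ne'
          rw [hC_def]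
          nlinarith [this]
  -- displacement facts
  have MΔ : ∀ n, MemLp (L.ΔX n) 2 P := fun n => ((MU n).const_mul _).add (M1 n)
  have IΔ : ∀ n, ∫ ω, L.ΔX n ω ∂P = 0 := by
    intro n
    calc ∫ ω, L.ΔX n ω ∂P
        = ∫ ω, (τ * phi (γ * τ) * L.U n ω + (L.ε n ω).1) ∂P := rfl
      _ = τ * phi (γ * τ) * ∫ ω, L.U n ω ∂P + ∫ ω, (L.ε n ω).1 ∂P := by
        rw [integral_add (((MU n).integrable one_le_two).const_mul _)
          ((M1 n).integrable one_le_two), integral_const_mul]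
      _ = 0 := by rw [IU n, I1 n]; ring
  have hDU : ∀ n, ∫ ω, L.ΔX n ω * L.U n ω ∂P = τ * phi (γ * τ) * (k * γ) := by
    intro n
    calc ∫ ω, L.ΔX n ω * L.U n ω ∂P
        = ∫ ω, (τ * phi (γ * τ) * L.U n ω + (L.ε n ω).1) * L.U n ω ∂P := rfl
      _ = τ * phi (γ * τ) * ∫ ω, L.U n ω * L.U n ω ∂P
          + ∫ ω, (L.ε n ω).1 * L.U n ω ∂P :=
        integral_comb_mul_left _ (MU n) (M1 n) (MU n)
      _ = τ * phi (γ * τ) * (k * γ) := by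
        rw [VU n, hcomm (fun ω => (L.ε n ω).1) (L.U n), (hUeps n n le_rfl).1, add_zero]
  have hDe2 : ∀ n, ∫ ω, L.ΔX n ω * (L.ε n ω).2 ∂P = B := by
    intro n
    calc ∫ ω, L.ΔX n ω * (L.ε n ω).2 ∂P
        = ∫ ω, (τ * phi (γ * τ) * L.U n ω + (L.ε n ω).1) * (L.ε n ω).2 ∂P := rfl
      _ = τ * phi (γ * τ) * ∫ ω, L.U n ω * (L.ε n ω).2 ∂P
          + ∫ ω, (L.ε n ω).1 * (L.ε n ω).2 ∂P :=
        integral_comb_mul_left _ (MU n) (M1 n) (M2 n)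
      _ = B := by rw [(hUeps n n le_rfl).2, Q12 n]; ring
  have hDeLater : ∀ n m : ℕ, n < m →
      (∫ ω, L.ΔX n ω * (L.ε m ω).1 ∂P = 0 ∧ ∫ ω, L.ΔX n ω * (L.ε m ω).2 ∂P = 0) := by
    intro n m hnm
    have hne : n ≠ m := hnm.ne
    constructor
    · calc ∫ ω, L.ΔX n ω * (L.ε m ω).1 ∂P
          = ∫ ω, (τ * phi (γ * τ) * L.U n ω + (L.ε n ω).1) * (L.ε m ω).1 ∂P := rfl
        _ = τ * phi (γ * τ) * ∫ ω, L.U n ω * (L.ε m ω).1 ∂P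
            + ∫ ω, (L.ε n ω).1 * (L.ε m ω).1 ∂P :=
          integral_comb_mul_left _ (MU n) (M1 n) (M1 m)
        _ = 0 := by
          rw [(hUeps n m hnm.le).1,
            hzmul (iεε hne measurable_fst measurable_fst) (M1 n).1 (M1 m).1 (I1 n)]
          ring
    · calc ∫ ω, L.ΔX n ω * (L.ε m ω).2 ∂P
          = ∫ ω, (τ * phi (γ * τ) * L.U n ω + (L.ε n ω).1) * (L.ε m ω).2 ∂P := rfl
        _ = τ * phi (γ * τ) * ∫ ω, L.U n ω * (L.ε m ω).2 ∂P
            + ∫ ω, (L.ε n ω).1 * (L.ε m ω).2 ∂P :=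
          integral_comb_mul_left _ (MU n) (M1 n) (M2 m)
        _ = 0 := by
          rw [(hUeps n m hnm.le).2,
            hzmul (iεε hne measurable_fst measurable_snd) (M1 n).1 (M2 m).1 (I1 n)]
          ring
  have hDXU : ∀ n j : ℕ, ∫ ω, L.ΔX n ω * L.U (n + j + 1) ω ∂P
      = Real.exp (-(γ * τ)) ^ j
        * (Real.exp (-(γ * τ)) * (τ * phi (γ * τ)) * (k * γ) + B) := by
    intro n j
    induction j with
    | zero =>
      calc ∫ ω, L.ΔX n ω * L.U (n + 0 + 1) ω ∂P
          = ∫ ω, L.ΔX n ω * (Real.exp (-(γ * τ)) * L.U n ω + (L.ε n ω).2) ∂P := rfl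
        _ = Real.exp (-(γ * τ)) * ∫ ω, L.ΔX n ω * L.U n ω ∂P
            + ∫ ω, L.ΔX n ω * (L.ε n ω).2 ∂P :=
          integral_comb_mul_right _ (MΔ n) (MU n) (M2 n)
        _ = _ := by rw [hDU n, hDe2 n]; ring
    | succ j ih =>
      calc ∫ ω, L.ΔX n ω * L.U (n + (j + 1) + 1) ω ∂P
          = ∫ ω, L.ΔX n ω
              * (Real.exp (-(γ * τ)) * L.U (n + j + 1) ω + (L.ε (n + j + 1) ω).2) ∂P := rfl
        _ = Real.exp (-(γ * τ)) * ∫ ω, L.ΔX n ω * L.U (n + j + 1) ω ∂P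
            + ∫ ω, L.ΔX n ω * (L.ε (n + j + 1) ω).2 ∂P :=
          integral_comb_mul_right _ (MΔ n) (MU (n + j + 1)) (M2 (n + j + 1))
        _ = _ := by
          rw [ih, (hDeLater n (n + j + 1) (by omega)).2]
          ring
  constructor
  · intro n
    have hc : cov P (L.ΔX n) (L.ΔX n) = ∫ ω, L.ΔX n ω * L.ΔX n ω ∂P := by
      unfold cov
      rw [IΔ n]
      simp only [sub_zero]
    rw [hc]
    have e0 : ∫ ω, L.ΔX n ω * L.ΔX n ω ∂P
        = τ * phi (γ * τ) * ∫ ω, L.U n ω * L.ΔX n ω ∂P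
          + ∫ ω, (L.ε n ω).1 * L.ΔX n ω ∂P :=
      integral_comb_mul_left _ (MU n) (M1 n) (MΔ n)
    have e1 : ∫ ω, L.U n ω * L.ΔX n ω ∂P = τ * phi (γ * τ) * (k * γ) := by
      rw [hcomm (L.U n) (L.ΔX n)]
      exact hDU n
    have e2 : ∫ ω, (L.ε n ω).1 * L.ΔX n ω ∂P = A := by
      calc ∫ ω, (L.ε n ω).1 * L.ΔX n ω ∂P
          = ∫ ω, (L.ε n ω).1 * (τ * phi (γ * τ) * L.U n ω + (L.ε n ω).1) ∂P := rfl
        _ = τ * phi (γ * τ) * ∫ ω, (L.ε n ω).1 * L.U n ω ∂P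
            + ∫ ω, (L.ε n ω).1 * (L.ε n ω).1 ∂P :=
          integral_comb_mul_right _ (M1 n) (MU n) (M1 n)
        _ = A := by
          rw [hcomm (fun ω => (L.ε n ω).1) (L.U n), (hUeps n n le_rfl).1, Q1 n]
          ring
    rw [e0, e1, e2]
    have := langevin_id_var (γ := γ) (k := k) (τ := τ) hγ.ne' hτ.ne'
    rw [hA_def]
    nlinarith [this]
  · intro n m hm
    obtain ⟨j, rfl⟩ : ∃ j, m = j + 1 := ⟨m - 1, by omega⟩
    have hc : cov P (L.ΔX n) (L.ΔX (n + (j + 1)))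
        = ∫ ω, L.ΔX n ω * L.ΔX (n + (j + 1)) ω ∂P := by
      unfold cov
      rw [IΔ n, IΔ (n + (j + 1))]
      simp only [sub_zero]
    rw [hc]
    have e0 : ∫ ω, L.ΔX n ω * L.ΔX (n + (j + 1)) ω ∂P
        = τ * phi (γ * τ) * ∫ ω, L.ΔX n ω * L.U (n + j + 1) ω ∂P
          + ∫ ω, L.ΔX n ω * (L.ε (n + j + 1) ω).1 ∂P := by
      calc ∫ ω, L.ΔX n ω * L.ΔX (n + (j + 1)) ω ∂P
          = ∫ ω, L.ΔX n ω
              * (τ * phi (γ * τ) * L.U (n + j + 1) ω + (L.ε (n + j + 1) ω).1) ∂P := rfl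
        _ = _ := integral_comb_mul_right _ (MΔ n) (MU (n + j + 1)) (M1 (n + j + 1))
    rw [e0, hDXU n j, (hDeLater n (n + j + 1) (by omega)).1, add_zero]
    have hpow : Real.exp (-(γ * τ)) ^ j = Real.exp (-((((j + 1 : ℕ) : ℝ) - 1) * γ * τ)) := by
      rw [← Real.exp_nat_mul]
      congr 1
      push_cast
      ring
    have hid := langevin_id_cov (γ := γ) (k := k) (τ := τ) hγ.ne' hτ.ne'
    calc τ * phi (γ * τ)
          * (Real.exp (-(γ * τ)) ^ j
            * (Real.exp (-(γ * τ)) * (τ * phi (γ * τ)) * (k * γ) + B))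
        = Real.exp (-(γ * τ)) ^ j
            * ((τ * phi (γ * τ))
              * (Real.exp (-(γ * τ)) * (τ * phi (γ * τ)) * (k * γ) + B)) := by ring
      _ = Real.exp (-(γ * τ)) ^ j * (k * γ * τ ^ 2 * phi (γ * τ) ^ 2) := by
          rw [hB_def, hid]
      _ = k * γ * τ ^ 2 * phi (γ * τ) ^ 2
            * Real.exp (-((((j + 1 : ℕ) : ℝ) - 1) * γ * τ)) := by
          rw [hpow]; ring
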